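/- arXiv:2305.12211 — 7 statements merged into one kernel-verified Lean document; each statement's English description precedes it below -/
import Mathlib

section
/- Let T be θ-averaged with S = (1/θ)(I - T) being 1/2-cocoercive, and let v be the infimal displacement vector of T (the minimum-norm element of the closure of the range of I - T). If S y - S z lies in the cone C_δ = {x : ⟨v, x⟩ ≥ sin(δ)‖v‖‖x‖} with S y ≠ S z for some δ ∈ (0, π/2), then ⟨-v, y - z⟩ ≤ cos(δ)‖v‖‖y - z‖. -/
/-- Lemma on the cone `C_δ`: if `S y - S z ∈ C_δ` and `S y ≠ S z`, then
`⟨-v, y - z⟩ ≤ cos δ ‖v‖ ‖y - z‖`, where `v` is the infimal displacement vector. -/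
theorem stmt2 {H : Type*} [NormedAddCommGroup H] [InnerProductSpace ℝ H]
    (θ : ℝ) (hθ : θ ∈ Set.Ioc (0 : ℝ) 1) (T S : H → H)
    (hS : ∀ x, S x = (1 / θ) • (x - T x))
    (hcoco : ∀ x y : H,
      (inner ℝ (S x - S y) (x - y) : ℝ) ≥ (1 / 2) * ‖S x - S y‖ ^ 2)
    (v : H)
    (hv_mem : v ∈ closure (Set.range fun x => x - T x))
    (hv_min : ∀ w ∈ closure (Set.range fun x => x - T x), ‖v‖ ≤ ‖w‖)
    (δ : ℝ) (hδ : δ ∈ Set.Ioo 0 (Real.pi / 2))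
    (y z : H)
    (hcone : (inner ℝ v (S y - S z) : ℝ) ≥ Real.sin δ * ‖v‖ * ‖S y - S z‖)
    (hne : S y ≠ S z) :
    (inner ℝ (-v) (y - z) : ℝ) ≤ Real.cos δ * ‖v‖ * ‖y - z‖ := by
  set u : H := S y - S z with hu_def
  have hu : u ≠ 0 := sub_ne_zero.mpr hne
  have hun : (0:ℝ) < ‖u‖ := norm_pos_iff.mpr hu
  have hsin : 0 < Real.sin δ := by
    apply Real.sin_pos_of_pos_of_lt_pi hδ.1
    linarith [hδ.2, Real.pi_pos]
  have hcos : 0 ≤ Real.cos δ := by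
    apply Real.cos_nonneg_of_mem_Icc
    constructor
    · linarith [hδ.1, Real.pi_pos]
    · exact le_of_lt hδ.2
  have hvu_nonneg : 0 ≤ (inner ℝ v u : ℝ) := le_trans (by positivity) hcone
  set c : ℝ := (inner ℝ v u : ℝ) / ‖u‖ ^ 2 with hc_def
  have hc : 0 ≤ c := div_nonneg hvu_nonneg (by positivity)
  set w : H := v - c • u with hw_def
  have hcoc := hcoco y z
  have huyz : 0 ≤ (inner ℝ u (y - z) : ℝ) := le_trans (by positivity) hcoc
  have hsin2 : Real.sin δ ^ 2 = 1 - Real.cos δ ^ 2 := by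
    have := Real.sin_sq_add_cos_sq δ
    linarith
  have hwnorm : ‖w‖ ≤ Real.cos δ * ‖v‖ := by
    have h1 : ‖w‖ ^ 2 = ‖v‖ ^ 2 - (inner ℝ v u : ℝ) ^ 2 / ‖u‖ ^ 2 := by
      rw [hw_def, @norm_sub_sq_real, real_inner_smul_right, norm_smul,
        Real.norm_eq_abs, mul_pow, sq_abs, hc_def]
      field_simp
      ring
    have h2 : (Real.sin δ * ‖v‖ * ‖u‖) ^ 2 ≤ (inner ℝ v u : ℝ) ^ 2 :=
      pow_le_pow_left₀ (by positivity) hcone 2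
    have h3 : ‖w‖ ^ 2 ≤ (Real.cos δ * ‖v‖) ^ 2 := by
      rw [h1]
      have : (Real.sin δ * ‖v‖ * ‖u‖) ^ 2 / ‖u‖ ^ 2 ≤ (inner ℝ v u : ℝ) ^ 2 / ‖u‖ ^ 2 :=
        div_le_div_of_nonneg_right h2 (by positivity)
      have heq : (Real.sin δ * ‖v‖ * ‖u‖) ^ 2 / ‖u‖ ^ 2 = (1 - Real.cos δ ^ 2) * ‖v‖ ^ 2 := by
        rw [← hsin2]; field_simp
      rw [heq] at this
      nlinarith
    nlinarith [norm_nonneg w, mul_nonneg hcos (norm_nonneg v)]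
  have hkey : (inner ℝ (-v) (y - z) : ℝ)
      = -(inner ℝ w (y - z) : ℝ) - c * (inner ℝ u (y - z) : ℝ) := by
    rw [hw_def]
    rw [inner_neg_left, inner_sub_left, real_inner_smul_left]
    ring
  have h4 : -(inner ℝ w (y - z) : ℝ) ≤ ‖w‖ * ‖y - z‖ := by
    have := abs_real_inner_le_norm w (y - z)
    have := neg_abs_le (inner ℝ w (y - z) : ℝ)
    linarith
  have h5 : ‖w‖ * ‖y - z‖ ≤ Real.cos δ * ‖v‖ * ‖y - z‖ :=
    mul_le_mul_of_nonneg_right hwnorm (norm_nonneg _)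
  have h6 : 0 ≤ c * (inner ℝ u (y - z) : ℝ) := mul_nonneg hc huyz
  linarith [hkey ▸ le_refl (inner ℝ (-v) (y - z) : ℝ)]
end

section
/- Let T be θ-averaged with S = (1/θ)(I - T) being 1/2-cocoercive with infimal displacement vector v. Suppose a sequence (y^k) in H satisfies y^k / k → -γ v strongly for some γ > 0. Then for any δ ∈ (0, π/2) and any z ∈ H, there exists N such that for all k > N, ⟨v, S y^k - S z⟩ ≤ ‖v‖ ‖S y^k - S z‖ sin δ. -/
/-- If `yᵏ/k → -γ v` strongly with `γ > 0`, then for any `δ ∈ (0, π/2)` and `z`,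
eventually `⟨v, S yᵏ - S z⟩ ≤ ‖v‖ ‖S yᵏ - S z‖ sin δ`. -/
theorem stmt3 {H : Type*} [NormedAddCommGroup H] [InnerProductSpace ℝ H]
    (θ : ℝ) (hθ : θ ∈ Set.Ioc (0 : ℝ) 1) (T S : H → H)
    (hS : ∀ x, S x = (1 / θ) • (x - T x))
    (hcoco : ∀ x y : H,
      (inner ℝ (S x - S y) (x - y) : ℝ) ≥ (1 / 2) * ‖S x - S y‖ ^ 2)
    (v : H)
    (hv_mem : v ∈ closure (Set.range fun x => x - T x))
    (hv_min : ∀ w ∈ closure (Set.range fun x => x - T x), ‖v‖ ≤ ‖w‖)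
    (y : ℕ → H) (γ : ℝ) (hγ : 0 < γ)
    (hlim : Filter.Tendsto (fun k : ℕ => (k : ℝ)⁻¹ • y k) Filter.atTop
      (nhds ((-γ) • v)))
    (δ : ℝ) (hδ : δ ∈ Set.Ioo 0 (Real.pi / 2)) (z : H) :
    ∃ N : ℕ, ∀ k > N,
      (inner ℝ v (S (y k) - S z) : ℝ) ≤ ‖v‖ * ‖S (y k) - S z‖ * Real.sin δ := by
  obtain ⟨hδ1, hδ2⟩ := hδ
  rcases eq_or_ne v 0 with hv | hv
  · exact ⟨0, fun k _ => by simp [hv]⟩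
  · have hvn : 0 < ‖v‖ := norm_pos_iff.mpr hv
    have hsin : 0 < Real.sin δ :=
      Real.sin_pos_of_pos_of_lt_pi hδ1 (hδ2.trans (by linarith [Real.pi_pos]))
    have hεpos : 0 < γ * (‖v‖ * Real.sin δ) := by positivity
    have h1 : Filter.Tendsto (fun k : ℕ => ‖(k : ℝ)⁻¹ • y k + γ • v‖)
        Filter.atTop (nhds 0) := by
      have := (hlim.sub_const ((-γ) • v)).norm
      simpa [neg_smul, sub_neg_eq_add] using this
    have h2 : Filter.Tendsto (fun k : ℕ => (k : ℝ)⁻¹ * ‖z‖)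
        Filter.atTop (nhds 0) := by
      simpa using (tendsto_inv_atTop_nhds_zero_nat : Filter.Tendsto (fun n : ℕ => (n : ℝ)⁻¹) Filter.atTop (nhds 0)).mul_const ‖z‖
    have h3 := h1.add h2
    rw [add_zero] at h3
    have hev : ∀ᶠ k : ℕ in Filter.atTop,
        ‖(k : ℝ)⁻¹ • y k + γ • v‖ + (k : ℝ)⁻¹ * ‖z‖ < γ * (‖v‖ * Real.sin δ) :=
      h3.eventually_lt_const hεpos
    rw [Filter.eventually_atTop] at hev
    obtain ⟨N, hN⟩ := hev
    refine ⟨N, fun k hk => ?_⟩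
    have hkN := hN k (le_of_lt hk)
    have hkpos : (0 : ℝ) < (k : ℝ) := by
      exact_mod_cast Nat.lt_of_le_of_lt (Nat.zero_le N) hk
    set u := S (y k) - S z with hu
    have hc : (inner ℝ u (y k - z) : ℝ) ≥ (1 / 2) * ‖u‖ ^ 2 := hcoco (y k) z
    have h0 : (0 : ℝ) ≤ inner ℝ u (y k - z) := le_trans (by positivity) hc
    have h4 : (0 : ℝ) ≤ inner ℝ u ((k : ℝ)⁻¹ • (y k - z)) := by
      rw [real_inner_smul_right]
      exact mul_nonneg (by positivity) h0
    have key : (k : ℝ)⁻¹ • (y k - z)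
        = (((k : ℝ)⁻¹ • y k + γ • v) - (k : ℝ)⁻¹ • z) - γ • v := by
      module
    rw [key, inner_sub_right, real_inner_smul_right, sub_nonneg] at h4
    have h5 : (inner ℝ u (((k : ℝ)⁻¹ • y k + γ • v) - (k : ℝ)⁻¹ • z) : ℝ)
        ≤ ‖u‖ * (‖(k : ℝ)⁻¹ • y k + γ • v‖ + (k : ℝ)⁻¹ * ‖z‖) := by
      refine le_trans (real_inner_le_norm _ _) (mul_le_mul_of_nonneg_left ?_ (norm_nonneg _))
      calc ‖((k : ℝ)⁻¹ • y k + γ • v) - (k : ℝ)⁻¹ • z‖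
          ≤ ‖(k : ℝ)⁻¹ • y k + γ • v‖ + ‖(k : ℝ)⁻¹ • z‖ := norm_sub_le _ _
        _ = ‖(k : ℝ)⁻¹ • y k + γ • v‖ + (k : ℝ)⁻¹ * ‖z‖ := by
            rw [norm_smul, Real.norm_eq_abs, abs_of_pos (by positivity)]
    have h6 : γ * (inner ℝ u v : ℝ) ≤ ‖u‖ * (γ * (‖v‖ * Real.sin δ)) :=
      le_trans (le_trans h4 h5)
        (mul_le_mul_of_nonneg_left (le_of_lt hkN) (norm_nonneg _))
    have h7 : (inner ℝ v u : ℝ) = inner ℝ u v := real_inner_comm _ _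
    have hun : (0 : ℝ) ≤ ‖u‖ := norm_nonneg _
    nlinarith [h6, h7]
end

section
/- Under the setup of the randomized coordinate update with T_I = I - θ S_I, S 1/2-cocoercive with respect to ‖·‖_M, E[I] = α·1, and E[‖u_I‖_M²] ≤ β‖u‖_M², define T̄ = I - αθS. Then for all x, z ∈ H: E_I[‖T_I x - T̄ z‖_M²] ≤ ‖x - z‖_M² + θ²(β - α²)‖Sx‖_M² - αθ(1 - αθ)‖Sx - Sz‖_M². -/
open MeasureTheory

/-- The `M`-inner product induced by a positive definite self-adjoint operator `M`. -/
noncomputable def Minner {H : Type*} [NormedAddCommGroup H] [InnerProductSpace ℝ H]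
    (M : H →L[ℝ] H) (x y : H) : ℝ := inner ℝ x (M y)

/-- The `M`-norm. -/
noncomputable def Mnorm {H : Type*} [NormedAddCommGroup H] [InnerProductSpace ℝ H]
    (M : H →L[ℝ] H) (x : H) : ℝ := Real.sqrt (Minner M x x)

/-- Coordinatewise selection `u_I` of a vector `u` by a selection vector `c`. -/
noncomputable def sel {m : ℕ} {Hi : Fin m → Type*} [∀ i, NormedAddCommGroup (Hi i)]
    [∀ i, InnerProductSpace ℝ (Hi i)] (c : Fin m → ℝ) (u : PiLp 2 Hi) : PiLp 2 Hi :=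
  WithLp.toLp 2 (fun i => c i • u i)

section aux
variable {H : Type*} [NormedAddCommGroup H] [InnerProductSpace ℝ H] (M : H →L[ℝ] H)

lemma minner_nonneg (hMpos : ∀ x : H, x ≠ 0 → 0 < (inner ℝ x (M x) : ℝ)) (u : H) :
    0 ≤ Minner M u u := by
  rcases eq_or_ne u 0 with h | h
  · simp [Minner, h]
  · exact (hMpos u h).le

lemma mnorm_sq (hMpos : ∀ x : H, x ≠ 0 → 0 < (inner ℝ x (M x) : ℝ)) (u : H) :
    Mnorm M u ^ 2 = Minner M u u :=
  Real.sq_sqrt (minner_nonneg M hMpos u)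

lemma minner_comm (hMsym : ∀ x y : H, (inner ℝ (M x) y : ℝ) = inner ℝ x (M y)) (u v : H) :
    Minner M u v = Minner M v u := by
  unfold Minner
  rw [← hMsym, real_inner_comm]

lemma minner_add_left (u v w : H) : Minner M (u + v) w = Minner M u w + Minner M v w := by
  simp [Minner, inner_add_left]

lemma minner_sub_left (u v w : H) : Minner M (u - v) w = Minner M u w - Minner M v w := by
  simp [Minner, inner_sub_left]

lemma minner_smul_left (c : ℝ) (u v : H) : Minner M (c • u) v = c * Minner M u v := by
  simp [Minner, real_inner_smul_left]

lemma minner_add_right (u v w : H) : Minner M u (v + w) = Minner M u v + Minner M u w := by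
  simp [Minner, inner_add_right]

lemma minner_sub_right (u v w : H) : Minner M u (v - w) = Minner M u v - Minner M u w := by
  simp [Minner, inner_sub_right]

lemma minner_smul_right (c : ℝ) (u v : H) : Minner M u (c • v) = c * Minner M u v := by
  simp [Minner, real_inner_smul_right]

lemma minner_expand (hMsym : ∀ x y : H, (inner ℝ (M x) y : ℝ) = inner ℝ x (M y)) (v w : H) (t : ℝ) :
    Minner M (v - t • w) (v - t • w)
      = Minner M v v - 2 * t * Minner M v w + t ^ 2 * Minner M w w := by
  rw [minner_sub_left, minner_sub_right, minner_sub_right, minner_smul_left,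
    minner_smul_left, minner_smul_right, minner_smul_right, minner_comm M hMsym w v]
  ring

end aux

lemma sel_apply {m : ℕ} {Hi : Fin m → Type*} [∀ i, NormedAddCommGroup (Hi i)]
    [∀ i, InnerProductSpace ℝ (Hi i)] (c : Fin m → ℝ) (u : PiLp 2 Hi) (i : Fin m) :
    sel c u i = c i • u i := rfl

/-- One-step comparison bound between the randomized-coordinate update `T_I x`
and the averaged full update `T̄ z = z - αθ S z`. -/
theorem stmt6 {m : ℕ} {Hi : Fin m → Type*} [∀ i, NormedAddCommGroup (Hi i)]
    [∀ i, InnerProductSpace ℝ (Hi i)]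
    {Ω : Type*} [MeasurableSpace Ω] (μ : Measure Ω) [IsProbabilityMeasure μ]
    (M : PiLp 2 Hi →L[ℝ] PiLp 2 Hi)
    (hMsym : ∀ x y : PiLp 2 Hi, (inner ℝ (M x) y : ℝ) = inner ℝ x (M y))
    (hMpos : ∀ x : PiLp 2 Hi, x ≠ 0 → 0 < (inner ℝ x (M x) : ℝ))
    (θ : ℝ) (hθ : θ ∈ Set.Ioc (0 : ℝ) 1)
    (T S : PiLp 2 Hi → PiLp 2 Hi)
    (hS : ∀ x, S x = (1 / θ) • (x - T x))
    (hcoco : ∀ x y, Minner M (S x - S y) (x - y) ≥ (1 / 2) * (Mnorm M (S x - S y)) ^ 2)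
    (α β : ℝ) (hα : α ∈ Set.Ioc (0 : ℝ) 1)
    (I : Ω → Fin m → ℝ) (hImeas : Measurable I)
    (hIrange : ∀ ω i, I ω i ∈ Set.Icc (0 : ℝ) 1)
    (hImean : ∀ i, ∫ ω, I ω i ∂μ = α)
    (hβ : ∀ u : PiLp 2 Hi, ∫ ω, (Mnorm M (sel (I ω) u)) ^ 2 ∂μ ≤ β * (Mnorm M u) ^ 2)
    (x z : PiLp 2 Hi) :
    ∫ ω, (Mnorm M ((x - θ • sel (I ω) (S x)) - (z - (α * θ) • S z))) ^ 2 ∂μ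
      ≤ (Mnorm M (x - z)) ^ 2 + θ ^ 2 * (β - α ^ 2) * (Mnorm M (S x)) ^ 2
        - α * θ * (1 - α * θ) * (Mnorm M (S x - S z)) ^ 2 := by
  obtain ⟨hθ0, hθ1⟩ := hθ
  obtain ⟨hα0, hα1⟩ := hα
  set a : PiLp 2 Hi := S x with ha
  set b : PiLp 2 Hi := S z with hb
  set u : PiLp 2 Hi := x - z with hu
  set v : PiLp 2 Hi := u + (α * θ) • b with hv
  -- rewrite the integrand vector
  have hrw : ∀ c : Fin m → ℝ,
      (x - θ • sel c a) - (z - (α * θ) • b) = v - θ • sel c a := by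
    intro c
    rw [hv, hu]
    module
  set L : Ω → ℝ := fun ω => Minner M (sel (I ω) a) v with hL
  set N : Ω → ℝ := fun ω => Mnorm M (sel (I ω) a) ^ 2 with hN
  set Q : ℝ := Minner M v v with hQ
  have hpoint : ∀ ω, (Mnorm M ((x - θ • sel (I ω) a) - (z - (α * θ) • b))) ^ 2
      = Q - (2 * θ) * L ω + θ ^ 2 * N ω := by
    intro ω
    simp only [hN, hL]
    rw [hrw (I ω), mnorm_sq M hMpos, mnorm_sq M hMpos, minner_expand M hMsym,
      minner_comm M hMsym v (sel (I ω) a), hQ]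
  -- integrability of coordinates
  have hIi : ∀ i, Integrable (fun ω => I ω i) μ := by
    intro i
    refine ⟨((measurable_pi_apply i).comp hImeas).aestronglyMeasurable, ?_⟩
    refine HasFiniteIntegral.of_bounded (C := 1) (ae_of_all _ fun ω => ?_)
    have := hIrange ω i
    rw [Real.norm_eq_abs, abs_le]
    constructor <;> linarith [this.1, this.2]
  -- L as a finite sum
  have hLsum : L = fun ω => ∑ i, I ω i * (inner ℝ (a i) ((M v) i) : ℝ) := by
    funext ω
    rw [hL]
    simp only [Minner, PiLp.inner_apply, sel_apply, real_inner_smul_left]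
  have hLint : Integrable L μ := by
    rw [hLsum]
    exact integrable_finset_sum _ fun i _ => (hIi i).mul_const _
  have hLval : ∫ ω, L ω ∂μ = α * Minner M a v := by
    rw [hLsum]
    rw [integral_finset_sum _ fun i _ => (hIi i).mul_const _]
    have : ∀ i : Fin m, ∫ ω, I ω i * (inner ℝ (a i) ((M v) i) : ℝ) ∂μ
        = α * (inner ℝ (a i) ((M v) i) : ℝ) := by
      intro i
      rw [integral_mul_const, hImean i]
    simp only [this]
    have hsum : Minner M a v = ∑ i, (inner ℝ (a i) ((M v) i) : ℝ) := by
      simp [Minner, PiLp.inner_apply]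
    rw [hsum, Finset.mul_sum]
  -- norm bound on selections
  have hselnorm : ∀ ω, ‖sel (I ω) a‖ ≤ ‖a‖ := by
    intro ω
    have h2 : (inner ℝ (sel (I ω) a) (sel (I ω) a) : ℝ) ≤ (inner ℝ a a : ℝ) := by
      rw [PiLp.inner_apply, PiLp.inner_apply]
      refine Finset.sum_le_sum fun i _ => ?_
      rw [sel_apply, real_inner_smul_left, real_inner_smul_right]
      have h01 := hIrange ω i
      have hp : (0:ℝ) ≤ inner ℝ (a i) (a i) := real_inner_self_nonneg
      nlinarith [mul_nonneg (mul_nonneg h01.1 (sub_nonneg.2 h01.2)) hp,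
        mul_nonneg (sub_nonneg.2 h01.2) hp, h01.1, h01.2]
    rw [real_inner_self_eq_norm_sq, real_inner_self_eq_norm_sq] at h2
    nlinarith [norm_nonneg (sel (I ω) a), norm_nonneg a]
  -- integrability of N
  have hNmeas : Measurable N := by
    have hsel : Continuous fun c : Fin m → ℝ => sel c a := by
      have h1 : Continuous fun c : Fin m → ℝ => (fun i => c i • a i : ∀ i, Hi i) :=
        continuous_pi fun i => (continuous_apply i).smul continuous_const
      exact (PiLp.continuous_toLp 2 Hi).comp h1
    have hg : Continuous fun w : PiLp 2 Hi => Mnorm M w ^ 2 := by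
      have : Continuous fun w : PiLp 2 Hi => Minner M w w :=
        continuous_id.inner M.continuous
      exact (Real.continuous_sqrt.comp this).pow 2
    exact (hg.comp hsel).measurable.comp hImeas
  have hNbound : ∀ ω, ‖N ω‖ ≤ ‖M‖ * ‖a‖ ^ 2 := by
    intro ω
    have h0 : 0 ≤ N ω := by
      rw [hN]; positivity
    have h1 : N ω = Minner M (sel (I ω) a) (sel (I ω) a) := mnorm_sq M hMpos _
    rw [Real.norm_eq_abs, abs_of_nonneg h0, h1]
    have h2 : (inner ℝ (sel (I ω) a) (M (sel (I ω) a)) : ℝ)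
        ≤ ‖sel (I ω) a‖ * ‖M (sel (I ω) a)‖ := real_inner_le_norm _ _
    have h3 : ‖M (sel (I ω) a)‖ ≤ ‖M‖ * ‖sel (I ω) a‖ := M.le_opNorm _
    have h4 := hselnorm ω
    have h5 : (0:ℝ) ≤ ‖sel (I ω) a‖ := norm_nonneg _
    have h6 : (0:ℝ) ≤ ‖M‖ := ContinuousLinearMap.opNorm_nonneg M
    unfold Minner
    calc (inner ℝ (sel (I ω) a) (M (sel (I ω) a)) : ℝ)
        ≤ ‖sel (I ω) a‖ * ‖M (sel (I ω) a)‖ := h2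
      _ ≤ ‖sel (I ω) a‖ * (‖M‖ * ‖sel (I ω) a‖) := mul_le_mul_of_nonneg_left h3 h5
      _ = ‖M‖ * (‖sel (I ω) a‖ * ‖sel (I ω) a‖) := by ring
      _ ≤ ‖M‖ * (‖a‖ * ‖a‖) :=
          mul_le_mul_of_nonneg_left (mul_le_mul h4 h4 h5 (norm_nonneg a)) h6
      _ = ‖M‖ * ‖a‖ ^ 2 := by ring
  have hNint : Integrable N μ :=
    ⟨hNmeas.aestronglyMeasurable, HasFiniteIntegral.of_bounded (ae_of_all _ hNbound)⟩
  -- compute the integral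
  have hInt : ∫ ω, (Mnorm M ((x - θ • sel (I ω) a) - (z - (α * θ) • b))) ^ 2 ∂μ
      = Q - (2 * θ) * (∫ ω, L ω ∂μ) + θ ^ 2 * (∫ ω, N ω ∂μ) := by
    rw [integral_congr_ae (ae_of_all _ hpoint)]
    have i1 : Integrable (fun ω => Q - 2 * θ * L ω) μ :=
      (integrable_const Q).sub (hLint.const_mul _)
    have i2 : Integrable (fun ω => θ ^ 2 * N ω) μ := hNint.const_mul _
    rw [integral_add i1 i2, integral_sub (integrable_const Q) (hLint.const_mul _),
      integral_const_mul, integral_const_mul, integral_const]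
    simp
  have hNle : ∫ ω, N ω ∂μ ≤ β * (Mnorm M a) ^ 2 := hβ a
  -- final algebra
  have hQexp : Q = Minner M u u + 2 * (α * θ) * Minner M b u + (α * θ) ^ 2 * Minner M b b := by
    rw [hQ, hv]
    simp only [minner_add_left, minner_add_right, minner_smul_left, minner_smul_right]
    rw [minner_comm M hMsym u b]
    ring
  have hav : Minner M a v = Minner M a u + (α * θ) * Minner M a b := by
    rw [hv, minner_add_right, minner_smul_right]
  have hd : Minner M (a - b) (a - b)
      = Minner M a a - 2 * Minner M a b + Minner M b b := by
    rw [minner_sub_left, minner_sub_right, minner_sub_right, minner_comm M hMsym b a]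
    ring
  have hc := hcoco x z
  rw [← ha, ← hb, ← hu, mnorm_sq M hMpos, hd, minner_sub_left] at hc
  -- rewrite goal norms
  rw [hInt, hLval, mnorm_sq M hMpos (x - z), mnorm_sq M hMpos a, mnorm_sq M hMpos (a - b), ← hu, hd]
  have hslack : 0 ≤ (α * θ) *
      ((Minner M a u - Minner M b u)
        - 1 / 2 * (Minner M a a - 2 * Minner M a b + Minner M b b)) := by
    apply mul_nonneg
    · positivity
    · linarith
  have hNle' : θ ^ 2 * (∫ ω, N ω ∂μ) ≤ θ ^ 2 * (β * Minner M a a) := by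
    rw [← mnorm_sq M hMpos a]
    apply mul_le_mul_of_nonneg_left hNle (by positivity)
  rw [hQexp, hav]
  linarith [hslack, hNle']
end

section
/- Let U₁, U₂ be subspaces of H with U₁ ∩ U₂ = {0}, where U₂ decomposes into m mutually M-orthogonal blocks, and suppose |⟨u₁,u₂⟩_M| ≤ c_F ‖u₁‖_M‖u₂‖_M for all u₁ ∈ U₁, u₂ ∈ U₂, with c_F ≤ √((1-θ)/(1-αθ)) for given θ ∈ (0,1], α ∈ (0,1]. Let I ∈ [0,1]^m be a random selection vector with E[I] = α·1, and for u = g + h (g ∈ U₁, h = Σ hᵢ ∈ U₂ with hᵢ in the i-th block), define u_I = αg + Σᵢ Iᵢ hᵢ. Then E[u_I] = αu and E[‖u_I‖_M²] ≤ β‖u‖_M² with β = α² + (α - α²)/(1 - c_F²), and moreover βθ ≤ α. -/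
open MeasureTheory

lemma Dbound (θ α c : ℝ) (hθ0 : 0 < θ) (hθ1 : θ ≤ 1) (hα1 : α < 1)
    (hc0 : 0 ≤ c) (hc : c ≤ Real.sqrt ((1 - θ) / (1 - α * θ))) :
    θ * (1 - α) ≤ (1 - c ^ 2) * (1 - α * θ) ∧ 0 < 1 - α * θ := by
  have hden : 0 < 1 - α * θ := by nlinarith
  have hr0 : 0 ≤ (1 - θ) / (1 - α * θ) := div_nonneg (by linarith) hden.le
  have hc2 : c ^ 2 ≤ (1 - θ) / (1 - α * θ) := by
    calc c ^ 2 ≤ Real.sqrt ((1 - θ) / (1 - α * θ)) ^ 2 := pow_le_pow_left₀ hc0 hc 2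
      _ = (1 - θ) / (1 - α * θ) := Real.sq_sqrt hr0
  have := (le_div_iff₀ hden).1 hc2
  exact ⟨by nlinarith, hden⟩

lemma keyalg2 (θ α c : ℝ) (hθ0 : 0 < θ) (hθ1 : θ ≤ 1) (hα0 : 0 < α) (hα1 : α ≤ 1)
    (hc0 : 0 ≤ c) (hc : c ≤ Real.sqrt ((1 - θ) / (1 - α * θ))) :
    (α ^ 2 + (α - α ^ 2) / (1 - c ^ 2)) * θ ≤ α := by
  rcases eq_or_lt_of_le hα1 with h1 | h1
  · subst h1; norm_num; linarith
  · obtain ⟨hD, hden⟩ := Dbound θ α c hθ0 hθ1 h1 hc0 hc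
    set D := 1 - c ^ 2 with hDdef
    have hDpos : 0 < D := by nlinarith
    set s := (α - α ^ 2) / D with hsdef
    have hs0 : 0 ≤ s := div_nonneg (by nlinarith) hDpos.le
    have hsD : s * D = α - α ^ 2 := div_mul_cancel₀ _ hDpos.ne'
    have h2 : s * (θ * (1 - α)) ≤ s * (D * (1 - α * θ)) :=
      mul_le_mul_of_nonneg_left hD hs0
    nlinarith [mul_pos hα0 (by linarith : (0:ℝ) < 1 - α)]

lemma keyalg (θ α c A B C a b : ℝ) (hθ0 : 0 < θ) (hθ1 : θ ≤ 1) (hα0 : 0 < α) (hα1 : α ≤ 1)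
    (hc0 : 0 ≤ c) (hc : c ≤ Real.sqrt ((1 - θ) / (1 - α * θ)))
    (hA : A = a ^ 2) (hC : C = b ^ 2) (hB : |B| ≤ c * a * b) :
    α ^ 2 * A + 2 * α ^ 2 * B + α * C ≤ (α ^ 2 + (α - α ^ 2) / (1 - c ^ 2)) * (A + 2 * B + C) := by
  have hB' : -(c * a * b) ≤ B := neg_le_of_abs_le hB
  rcases eq_or_lt_of_le hα1 with h1 | h1
  · subst h1; norm_num
  · obtain ⟨hD, hden⟩ := Dbound θ α c hθ0 hθ1 h1 hc0 hc
    set D := 1 - c ^ 2 with hDdef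
    have hDpos : 0 < D := by nlinarith
    set s := (α - α ^ 2) / D with hsdef
    have hs0 : 0 ≤ s := div_nonneg (by nlinarith) hDpos.le
    have hsD : s * D = α - α ^ 2 := div_mul_cancel₀ _ hDpos.ne'
    have hDC : D * C ≤ A + 2 * B + C := by nlinarith [sq_nonneg (a - c * b)]
    have h2 : s * (D * C) ≤ s * (A + 2 * B + C) := mul_le_mul_of_nonneg_left hDC hs0
    have h3 : s * (D * C) = (α - α ^ 2) * C := by rw [← mul_assoc, hsD]
    nlinarith

/-- With a non-orthogonal block `U₁` handled via the Friedrichs angle bound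
`c_F ≤ √((1-θ)/(1-αθ))`, the randomized selection `u_I = αg + Σᵢ Iᵢhᵢ` satisfies
`E[u_I] = αu` and `E[‖u_I‖_M²] ≤ β‖u‖_M²` with `β = α² + (α-α²)/(1-c_F²)` and `βθ ≤ α`. -/
theorem stmt9 {H : Type*} [NormedAddCommGroup H] [InnerProductSpace ℝ H]
    [CompleteSpace H]
    {Ω : Type*} [MeasurableSpace Ω] (μ : Measure Ω) [IsProbabilityMeasure μ]
    (M : H →L[ℝ] H)
    (hMsym : ∀ x y : H, (inner ℝ (M x) y : ℝ) = inner ℝ x (M y))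
    (hMpos : ∀ x : H, x ≠ 0 → 0 < (inner ℝ x (M x) : ℝ))
    (U₁ U₂ : Submodule ℝ H) (hinter : U₁ ⊓ U₂ = ⊥)
    (m : ℕ) (V : Fin m → Submodule ℝ H) (hVU₂ : ∀ i, V i ≤ U₂)
    (horth : ∀ i j, i ≠ j → ∀ x ∈ V i, ∀ y ∈ V j, Minner M x y = 0)
    (θ α cF : ℝ) (hθ : θ ∈ Set.Ioc (0 : ℝ) 1) (hα : α ∈ Set.Ioc (0 : ℝ) 1)
    (hcF0 : 0 ≤ cF) (hcF : cF ≤ Real.sqrt ((1 - θ) / (1 - α * θ)))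
    (hangle : ∀ u₁ ∈ U₁, ∀ u₂ ∈ U₂,
      |Minner M u₁ u₂| ≤ cF * Mnorm M u₁ * Mnorm M u₂)
    (I : Ω → Fin m → ℝ) (hImeas : Measurable I)
    (hIrange : ∀ ω i, I ω i ∈ Set.Icc (0 : ℝ) 1)
    (hImean : ∀ i, ∫ ω, I ω i ∂μ = α)
    (g : H) (hg : g ∈ U₁) (hv : Fin m → H) (hhv : ∀ i, hv i ∈ V i) :
    (∫ ω, (α • g + ∑ i, I ω i • hv i) ∂μ) = α • (g + ∑ i, hv i) ∧
      (∫ ω, (Mnorm M (α • g + ∑ i, I ω i • hv i)) ^ 2 ∂μ)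
        ≤ (α ^ 2 + (α - α ^ 2) / (1 - cF ^ 2)) * (Mnorm M (g + ∑ i, hv i)) ^ 2 ∧
      (α ^ 2 + (α - α ^ 2) / (1 - cF ^ 2)) * θ ≤ α := by
  obtain ⟨hθ0, hθ1⟩ := hθ
  obtain ⟨hα0, hα1⟩ := hα
  -- basic properties of Minner
  have Qadd_l : ∀ x y z : H, Minner M (x + y) z = Minner M x z + Minner M y z := by
    intro x y z; simp [Minner, inner_add_left]
  have Qadd_r : ∀ x y z : H, Minner M x (y + z) = Minner M x y + Minner M x z := by
    intro x y z; simp [Minner, inner_add_right]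
  have Qsmul_l : ∀ (t : ℝ) (x y : H), Minner M (t • x) y = t * Minner M x y := by
    intro t x y; simp [Minner, real_inner_smul_left]
  have Qsmul_r : ∀ (t : ℝ) (x y : H), Minner M x (t • y) = t * Minner M x y := by
    intro t x y; simp [Minner, real_inner_smul_right]
  have Qsum_l : ∀ (f : Fin m → H) (y : H),
      Minner M (∑ i, f i) y = ∑ i, Minner M (f i) y := by
    intro f y; simp [Minner, sum_inner]
  have Qsum_r : ∀ (x : H) (f : Fin m → H),
      Minner M x (∑ i, f i) = ∑ i, Minner M x (f i) := by
    intro x f; simp [Minner, inner_sum]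
  have Qcomm : ∀ x y : H, Minner M x y = Minner M y x := by
    intro x y; unfold Minner; rw [← hMsym]; exact real_inner_comm _ _
  have Qnn : ∀ x : H, 0 ≤ Minner M x x := by
    intro x
    rcases eq_or_ne x 0 with rfl | hx
    · simp [Minner]
    · exact (hMpos x hx).le
  have Mnorm_sq : ∀ x : H, Mnorm M x ^ 2 = Minner M x x := fun x => Real.sq_sqrt (Qnn x)
  -- diagonal collapse of block double sums
  have diag : ∀ (c : Fin m → ℝ) (i : Fin m),
      (∑ j, c j * Minner M (hv i) (hv j)) = c i * Minner M (hv i) (hv i) := by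
    intro c i
    rw [Finset.sum_eq_single i]
    · intro j _ hj
      rw [horth i j (Ne.symm hj) (hv i) (hhv i) (hv j) (hhv j), mul_zero]
    · intro h; exact absurd (Finset.mem_univ i) h
  -- expansion of the quadratic form
  have expand : ∀ (t : ℝ) (c : Fin m → ℝ),
      Minner M (t • g + ∑ i, c i • hv i) (t • g + ∑ i, c i • hv i)
      = t ^ 2 * Minner M g g + 2 * t * (∑ i, c i * Minner M g (hv i))
        + ∑ i, (c i) ^ 2 * Minner M (hv i) (hv i) := by
    intro t c
    have h1 : Minner M (t • g) (t • g) = t ^ 2 * Minner M g g := by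
      rw [Qsmul_l, Qsmul_r]; ring
    have h2 : Minner M (t • g) (∑ i, c i • hv i) = t * ∑ i, c i * Minner M g (hv i) := by
      rw [Qsum_r]
      simp only [Qsmul_l, Qsmul_r]
      rw [Finset.mul_sum]
    have h3 : Minner M (∑ i, c i • hv i) (t • g) = t * ∑ i, c i * Minner M g (hv i) := by
      rw [Qcomm]; exact h2
    have h4 : Minner M (∑ i, c i • hv i) (∑ i, c i • hv i)
        = ∑ i, (c i) ^ 2 * Minner M (hv i) (hv i) := by
      rw [Qsum_l]
      refine Finset.sum_congr rfl fun i _ => ?_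
      rw [Qsmul_l, Qsum_r]
      simp only [Qsmul_r]
      rw [diag c i]
      ring
    rw [Qadd_l, Qadd_r, Qadd_r, h1, h2, h3, h4]
    ring
  -- integrability of the selection coordinates
  have hIm : ∀ i, Measurable fun ω => I ω i := fun i => (measurable_pi_apply i).comp hImeas
  have hIint : ∀ i, Integrable (fun ω => I ω i) μ := by
    intro i
    refine Integrable.mono' (integrable_const (1 : ℝ)) (hIm i).aestronglyMeasurable ?_
    filter_upwards with ω
    rw [Real.norm_eq_abs, abs_of_nonneg (hIrange ω i).1]
    exact (hIrange ω i).2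
  have hIsq : ∀ i, Integrable (fun ω => (I ω i) ^ 2) μ := by
    intro i
    refine Integrable.mono' (integrable_const (1 : ℝ)) ((hIm i).pow_const 2).aestronglyMeasurable ?_
    filter_upwards with ω
    rw [Real.norm_eq_abs, abs_of_nonneg (by positivity)]
    obtain ⟨h0, h1⟩ := hIrange ω i
    nlinarith
  -- Part 1 : expectation
  have part1 : (∫ ω, (α • g + ∑ i, I ω i • hv i) ∂μ) = α • (g + ∑ i, hv i) := by
    have hint2 : Integrable (fun ω => ∑ i, I ω i • hv i) μ :=
      integrable_finset_sum _ fun i _ => (hIint i).smul_const (hv i)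
    rw [integral_add (integrable_const _) hint2, integral_const,
      integral_finset_sum _ fun i _ => (hIint i).smul_const (hv i)]
    have : ∀ i : Fin m, (∫ ω, I ω i • hv i ∂μ) = α • hv i := by
      intro i; rw [integral_smul_const, hImean i]
    simp only [this, measure_univ, probReal_univ, ENNReal.toReal_one, one_smul, smul_add, Finset.smul_sum]
  refine ⟨part1, ?_, keyalg2 θ α cF hθ0 hθ1 hα0 hα1 hcF0 hcF⟩
  -- Part 2 : second moment bound
  set A := Minner M g g with hAdef
  set B := fun i => Minner M g (hv i) with hBdef
  set C := fun i => Minner M (hv i) (hv i) with hCdef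
  have hsum2 : Minner M (∑ i, hv i) (∑ i, hv i) = ∑ i, C i := by
    rw [Qsum_l]
    refine Finset.sum_congr rfl fun i _ => ?_
    rw [Qsum_r]
    have := diag (fun _ => (1 : ℝ)) i
    simpa using this
  have hB'eq : Minner M g (∑ i, hv i) = ∑ i, B i := Qsum_r g hv
  have hQuu : Mnorm M (g + ∑ i, hv i) ^ 2 = A + 2 * (∑ i, B i) + ∑ i, C i := by
    rw [Mnorm_sq, Qadd_l, Qadd_r, Qadd_r, Qcomm (∑ i, hv i) g, hsum2, hB'eq]
    ring
  -- integral computation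
  have hintB : Integrable (fun ω => 2 * α * ∑ i, I ω i * B i) μ :=
    (integrable_finset_sum _ fun i _ => (hIint i).mul_const (B i)).const_mul _
  have hintC : Integrable (fun ω => ∑ i, (I ω i) ^ 2 * C i) μ :=
    integrable_finset_sum _ fun i _ => (hIsq i).mul_const (C i)
  have hInt : (∫ ω, (Mnorm M (α • g + ∑ i, I ω i • hv i)) ^ 2 ∂μ)
      = α ^ 2 * A + 2 * α * (α * ∑ i, B i) + ∑ i, (∫ ω, (I ω i) ^ 2 ∂μ) * C i := by
    have heq : ∀ ω, (Mnorm M (α • g + ∑ i, I ω i • hv i)) ^ 2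
        = α ^ 2 * A + 2 * α * (∑ i, I ω i * B i) + ∑ i, (I ω i) ^ 2 * C i := by
      intro ω; rw [Mnorm_sq]; exact expand α fun i => I ω i
    calc (∫ ω, (Mnorm M (α • g + ∑ i, I ω i • hv i)) ^ 2 ∂μ)
        = ∫ ω, (α ^ 2 * A + 2 * α * (∑ i, I ω i * B i) + ∑ i, (I ω i) ^ 2 * C i) ∂μ := by
          exact integral_congr_ae (Filter.Eventually.of_forall fun ω => heq ω)
      _ = α ^ 2 * A + 2 * α * (α * ∑ i, B i) + ∑ i, (∫ ω, (I ω i) ^ 2 ∂μ) * C i := by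
          rw [integral_add (by exact (integrable_const _).add hintB) hintC,
            integral_add (integrable_const _) hintB, integral_const]
          rw [integral_const_mul, integral_finset_sum _ fun i _ => (hIint i).mul_const (B i),
            integral_finset_sum _ fun i _ => (hIsq i).mul_const (C i)]
          simp only [measure_univ, probReal_univ, ENNReal.toReal_one, smul_eq_mul, one_mul]
          congr 1
          · congr 2
            rw [Finset.mul_sum]
            refine Finset.sum_congr rfl fun i _ => ?_
            rw [integral_mul_const, hImean i]
          · refine Finset.sum_congr rfl fun i _ => ?_
            rw [integral_mul_const]
  rw [hInt, hQuu]
  have hsqle : ∀ i, (∫ ω, (I ω i) ^ 2 ∂μ) ≤ α := by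
    intro i
    rw [← hImean i]
    refine integral_mono (hIsq i) (hIint i) fun ω => ?_
    obtain ⟨h0, h1⟩ := hIrange ω i
    nlinarith
  have hstep : ∑ i, (∫ ω, (I ω i) ^ 2 ∂μ) * C i ≤ α * ∑ i, C i := by
    rw [Finset.mul_sum]
    exact Finset.sum_le_sum fun i _ => mul_le_mul_of_nonneg_right (hsqle i) (Qnn (hv i))
  have habs : |∑ i, B i| ≤ cF * Mnorm M g * Mnorm M (∑ i, hv i) := by
    rw [← hB'eq]
    exact hangle g hg _ (Submodule.sum_mem U₂ fun i _ => hVU₂ i (hhv i))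
  have hmain := keyalg θ α cF A (∑ i, B i) (∑ i, C i) (Mnorm M g) (Mnorm M (∑ i, hv i))
    hθ0 hθ1 hα0 hα1 hcF0 hcF (Mnorm_sq g).symm
    (by rw [Mnorm_sq]; exact hsum2.symm) habs
  have hrw : 2 * α * (α * ∑ i, B i) = 2 * α ^ 2 * ∑ i, B i := by ring
  linarith [hstep, hmain]
end

section
/- If c_F < √((1-θ)/(1-αθ)) strictly, with θ ∈ (0,1], α ∈ (0,1], then β = α² + (α-α²)/(1-c_F²) satisfies βθ < α strictly. -/
/-- If `c_F < √((1-θ)/(1-αθ))` strictly, then `β = α² + (α-α²)/(1-c_F²)`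
satisfies `βθ < α` strictly. -/
theorem stmt10 (θ α cF : ℝ) (hθ : θ ∈ Set.Ioc (0 : ℝ) 1)
    (hα : α ∈ Set.Ioc (0 : ℝ) 1) (hcF0 : 0 ≤ cF) (hcF1 : cF < 1)
    (h : cF < Real.sqrt ((1 - θ) / (1 - α * θ))) :
    (α ^ 2 + (α - α ^ 2) / (1 - cF ^ 2)) * θ < α := by
  obtain ⟨hθ0, hθ1⟩ := hθ
  obtain ⟨hα0, hα1⟩ := hα
  have hαθle : α * θ ≤ 1 := by nlinarith
  rcases lt_or_eq_of_le hαθle with hlt | heq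
  · -- α*θ < 1
    have hpos : (0 : ℝ) < 1 - α * θ := by linarith
    have hXnn : (0 : ℝ) ≤ (1 - θ) / (1 - α * θ) := div_nonneg (by linarith) hpos.le
    have hs : cF ^ 2 < (1 - θ) / (1 - α * θ) := by
      nlinarith [Real.sq_sqrt hXnn, Real.sqrt_nonneg ((1 - θ) / (1 - α * θ))]
    have key : cF ^ 2 * (1 - α * θ) < 1 - θ := (lt_div_iff₀ hpos).mp hs
    have h1s : (0 : ℝ) < 1 - cF ^ 2 := by nlinarith
    have hd : (α - α ^ 2) / (1 - cF ^ 2) * (1 - cF ^ 2) = α - α ^ 2 :=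
      div_mul_cancel₀ _ (ne_of_gt h1s)
    nlinarith [mul_pos hα0 (by linarith : (0:ℝ) < (1 - θ) - cF ^ 2 * (1 - α * θ)), hd, h1s]
  · -- α*θ = 1 forces α = θ = 1, contradiction with h
    have hθ1' : θ = 1 := by nlinarith
    have hα1' : α = 1 := by nlinarith
    rw [hθ1', hα1'] at h
    norm_num at h
    linarith
end

section
/- Let T : ℝ² → ℝ², T(x,y) = (x - (1+x-y)/2, y - (1+y-x)/2). Consider the randomized coordinate iteration starting from (x⁰,y⁰) = (0,0), where at each step with probability 1/2 only the first coordinate is updated to x - (1+x-y)/2, and with probability 1/2 only the second to y - (1+y-x)/2. Then for all k: E[x^k] = E[y^k] = -k/4, E[(x^k - y^k)²] = (1/3)(1 - 4^{-k}), and E[(x^k)² + (y^k)²] = k²/8 + k/24 + (1/9)(1 - 4^{-k}). In particular the variance of (x^k,y^k) equals k/24 + (1/9)(1 - 4^{-k}). -/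
open MeasureTheory Finset
open scoped ENNReal

set_option maxHeartbeats 1000000

namespace Stmt12Aux

/-- Deterministic version of the iteration, as a function of the coin flips. -/
noncomputable def P : (k : ℕ) → (Fin k → Bool) → ℝ × ℝ
  | 0, _ => (0, 0)
  | (k+1), b =>
      let p := P k (Fin.init b)
      if b (Fin.last k) then (p.1 - (1 + p.1 - p.2) / 2, p.2)
      else (p.1, p.2 - (1 + p.2 - p.1) / 2)

lemma P_snoc (k : ℕ) (b : Fin k → Bool) (t : Bool) :
    P (k+1) (Fin.snoc b t) =
      if t then ((P k b).1 - (1 + (P k b).1 - (P k b).2) / 2, (P k b).2)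
      else ((P k b).1, (P k b).2 - (1 + (P k b).2 - (P k b).1) / 2) := by
  simp [P, Fin.init_snoc, Fin.snoc_last]

lemma sum_snoc (k : ℕ) (f : (Fin (k+1) → Bool) → ℝ) :
    ∑ b : Fin (k+1) → Bool, f b
      = ∑ b : Fin k → Bool, (f (Fin.snoc b true) + f (Fin.snoc b false)) := by
  rw [← Equiv.sum_comp (Fin.snocEquiv (fun _ => Bool)) f, Fintype.sum_prod_type_right]
  congr 1
  ext b
  simp [Fin.snocEquiv, Fintype.sum_bool]

lemma sum_lin {ι : Type*} [Fintype ι] (f g h e : ι → ℝ) (a b cc d r : ℝ) :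
    ∑ i : ι, (a * f i + b * g i + cc * h i + d * e i + r)
      = a * ∑ i : ι, f i + b * ∑ i : ι, g i + cc * ∑ i : ι, h i + d * ∑ i : ι, e i
        + (Fintype.card ι : ℝ) * r := by
  simp [Finset.sum_add_distrib, Finset.mul_sum, Finset.sum_const, nsmul_eq_mul,
    Finset.card_univ, mul_comm]

lemma card_fun_bool (k : ℕ) : (Fintype.card (Fin k → Bool) : ℝ) = 2 ^ k := by
  simp [Fintype.card_fun]

lemma q_succ (k : ℕ) :
    (4 : ℝ) ^ (-((k:ℕ)+1 : ℤ)) = (4 : ℝ) ^ (-(k : ℤ)) / 4 := by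
  rw [show (-((k:ℕ)+1 : ℤ)) = -(k:ℤ) + (-1) by ring, zpow_add₀ (by norm_num : (4:ℝ) ≠ 0)]
  norm_num
  ring

/-- The key combinatorial identities, proved by induction on `k`. -/
lemma key (k : ℕ) :
    (1/2:ℝ)^k * (∑ b : Fin k → Bool, (P k b).1) = -(k:ℝ)/4 ∧
    (1/2:ℝ)^k * (∑ b : Fin k → Bool, (P k b).2) = -(k:ℝ)/4 ∧
    (1/2:ℝ)^k * (∑ b : Fin k → Bool, ((P k b).1 - (P k b).2)^2)
      = (1/3) * (1 - (4:ℝ)^(-(k:ℤ))) ∧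
    (1/2:ℝ)^k * (∑ b : Fin k → Bool, ((P k b).1 + (P k b).2)^2)
      = (k:ℝ)^2/4 + (k:ℝ)/12 - (1/9) * (1 - (4:ℝ)^(-(k:ℤ))) := by
  induction k with
  | zero => simp [P]
  | succ k ih =>
    obtain ⟨hX, hY, hD, hS⟩ := ih
    have hN : (1/2:ℝ)^k * (2:ℝ)^k = 1 := by
      rw [div_pow, one_pow, div_mul_eq_mul_div, one_mul, div_self (by positivity)]
    -- abbreviations
    set A := ∑ b : Fin k → Bool, (P k b).1 with hA
    set B := ∑ b : Fin k → Bool, (P k b).2 with hB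
    set C := ∑ b : Fin k → Bool, ((P k b).1 - (P k b).2)^2 with hC
    set D := ∑ b : Fin k → Bool, ((P k b).1 + (P k b).2)^2 with hD2
    have hq := q_succ k
    have hNc := card_fun_bool k
    -- sum identities at level k+1
    have e1 : ∑ b : Fin (k+1) → Bool, (P (k+1) b).1
        = (3/2) * A + (1/2) * B + 0 * C + 0 * D + (Fintype.card (Fin k → Bool) : ℝ) * (-1/2) := by
      rw [sum_snoc, ← sum_lin]
      refine Finset.sum_congr rfl fun b _ => ?_
      simp only [P_snoc, Bool.false_eq_true, if_true, if_false]
      ring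
    have e2 : ∑ b : Fin (k+1) → Bool, (P (k+1) b).2
        = (1/2) * A + (3/2) * B + 0 * C + 0 * D + (Fintype.card (Fin k → Bool) : ℝ) * (-1/2) := by
      rw [sum_snoc, ← sum_lin]
      refine Finset.sum_congr rfl fun b _ => ?_
      simp only [P_snoc, Bool.false_eq_true, if_true, if_false]
      ring
    have e3 : ∑ b : Fin (k+1) → Bool, ((P (k+1) b).1 - (P (k+1) b).2)^2
        = 0 * A + 0 * B + (1/2) * C + 0 * D + (Fintype.card (Fin k → Bool) : ℝ) * (1/2) := by
      rw [sum_snoc, ← sum_lin]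
      refine Finset.sum_congr rfl fun b _ => ?_
      simp only [P_snoc, Bool.false_eq_true, if_true, if_false]
      ring
    have e4 : ∑ b : Fin (k+1) → Bool, ((P (k+1) b).1 + (P (k+1) b).2)^2
        = (-2) * A + (-2) * B + (1/2) * C + 2 * D + (Fintype.card (Fin k → Bool) : ℝ) * (1/2) := by
      rw [sum_snoc, ← sum_lin]
      refine Finset.sum_congr rfl fun b _ => ?_
      simp only [P_snoc, Bool.false_eq_true, if_true, if_false]
      ring
    have hhalf : (1/2:ℝ)^(k+1) = (1/2:ℝ)^k * (1/2) := by ring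
    refine ⟨?_, ?_, ?_, ?_⟩
    · rw [e1, hNc, hhalf]
      push_cast
      linear_combination (3/4) * hX + (1/4) * hY - (1/4) * hN
    · rw [e2, hNc, hhalf]
      push_cast
      linear_combination (1/4) * hX + (3/4) * hY - (1/4) * hN
    · rw [e3, hNc, hhalf]
      push_cast
      rw [hq]
      linear_combination (1/4) * hD + (1/4) * hN
    · rw [e4, hNc, hhalf]
      push_cast
      rw [hq]
      linear_combination (-1) * hX + (-1) * hY + (1/4) * hD + hS + (1/4) * hN

end Stmt12Aux

open Stmt12Aux

/-- Exact moments of the randomized coordinate iteration for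
`T(x,y) = (x - (1+x-y)/2, y - (1+y-x)/2)` started at the origin, and the value
`k/24 + (1/9)(1 - 4⁻ᵏ)` of the variance of `(xᵏ, yᵏ)`. -/
theorem stmt12 {Ω : Type*} [MeasurableSpace Ω] (μ : Measure Ω)
    [IsProbabilityMeasure μ]
    (c : ℕ → Ω → Bool) (hmeas : ∀ k, Measurable (c k))
    (hiid : ProbabilityTheory.iIndepFun c μ)
    (hunif : ∀ k, μ (c k ⁻¹' {true}) = 1 / 2)
    (x y : ℕ → Ω → ℝ)
    (hx0 : ∀ ω, x 0 ω = 0) (hy0 : ∀ ω, y 0 ω = 0)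
    (hstep : ∀ k ω, (x (k + 1) ω, y (k + 1) ω) =
      if c k ω then (x k ω - (1 + x k ω - y k ω) / 2, y k ω)
      else (x k ω, y k ω - (1 + y k ω - x k ω) / 2)) :
    ∀ k : ℕ,
      (∫ ω, x k ω ∂μ) = -(k : ℝ) / 4 ∧
      (∫ ω, y k ω ∂μ) = -(k : ℝ) / 4 ∧
      (∫ ω, (x k ω - y k ω) ^ 2 ∂μ) = (1 / 3) * (1 - (4 : ℝ) ^ (-(k : ℤ))) ∧
      (∫ ω, ((x k ω) ^ 2 + (y k ω) ^ 2) ∂μ)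
        = (k : ℝ) ^ 2 / 8 + (k : ℝ) / 24 + (1 / 9) * (1 - (4 : ℝ) ^ (-(k : ℤ))) ∧
      (∫ ω, ((x k ω) ^ 2 + (y k ω) ^ 2) ∂μ)
          - ((∫ ω, x k ω ∂μ) ^ 2 + (∫ ω, y k ω ∂μ) ^ 2)
        = (k : ℝ) / 24 + (1 / 9) * (1 - (4 : ℝ) ^ (-(k : ℤ))) := by
  -- probability that a single coin takes a given value
  have hcoin : ∀ (i : ℕ) (t : Bool), μ (c i ⁻¹' {t}) = 1/2 := by
    intro i t
    cases t
    · have hcompl : c i ⁻¹' {false} = (c i ⁻¹' {true})ᶜ := by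
        ext ω; cases h : c i ω <;> simp [h]
      rw [hcompl, measure_compl (hmeas i (measurableSet_singleton true)) (measure_ne_top μ _),
        measure_univ, hunif, one_div, ENNReal.one_sub_inv_two]
    · exact hunif i
  -- measure of the event that the first k coins equal a given vector
  have hvecmeas : ∀ k : ℕ, Measurable (fun ω => fun i : Fin k => c (i:ℕ) ω) :=
    fun k => measurable_pi_lambda _ fun i => hmeas (i:ℕ)
  have hmeasvec : ∀ (k : ℕ) (b : Fin k → Bool),
      μ ((fun ω => fun i : Fin k => c (i:ℕ) ω) ⁻¹' {b}) = (1/2 : ℝ≥0∞)^k := by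
    intro k b
    classical
    set sets : ℕ → Set Bool := fun i => if h : i < k then {b ⟨i, h⟩} else Set.univ with hsets
    have hset : (fun ω => fun i : Fin k => c (i:ℕ) ω) ⁻¹' {b}
        = ⋂ i ∈ Finset.range k, c i ⁻¹' sets i := by
      ext ω
      simp only [Set.mem_preimage, Set.mem_singleton_iff, Set.mem_iInter, Finset.mem_range,
        hsets]
      constructor
      · intro h i hi
        rw [dif_pos hi]
        simp [show c i ω = b ⟨i, hi⟩ from by rw [← h]]
      · intro h
        funext i
        have := h (i:ℕ) i.isLt
        rw [dif_pos i.isLt] at this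
        simpa using this
    rw [hset, hiid.measure_inter_preimage_eq_mul (Finset.range k)
      (fun i _ => by by_cases h : i < k <;> simp [hsets, h])]
    have : ∀ i ∈ Finset.range k, μ (c i ⁻¹' sets i) = (1/2 : ℝ≥0∞) := by
      intro i hi
      rw [Finset.mem_range] at hi
      simp only [hsets, dif_pos hi]
      exact hcoin i _
    rw [Finset.prod_congr rfl this, Finset.prod_const, Finset.card_range]
  -- integral of a function of the first k coins
  have hint : ∀ (k : ℕ) (g : (Fin k → Bool) → ℝ),
      (∫ ω, g (fun i : Fin k => c (i:ℕ) ω) ∂μ)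
        = (1/2:ℝ)^k * ∑ b : Fin k → Bool, g b := by
    intro k g
    have h1 : ∀ ω, g (fun i : Fin k => c (i:ℕ) ω)
        = ∑ b : Fin k → Bool,
            Set.indicator ((fun ω' => fun i : Fin k => c (i:ℕ) ω') ⁻¹' {b}) (fun _ => g b) ω := by
      intro ω
      rw [Finset.sum_eq_single (fun i : Fin k => c (i:ℕ) ω)]
      · simp [Set.indicator_of_mem, Set.mem_preimage]
      · intro b _ hb
        rw [Set.indicator_of_notMem]
        simp only [Set.mem_preimage, Set.mem_singleton_iff]
        exact fun h => hb h.symm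
      · simp
    calc (∫ ω, g (fun i : Fin k => c (i:ℕ) ω) ∂μ)
        = ∫ ω, ∑ b : Fin k → Bool,
            Set.indicator ((fun ω' => fun i : Fin k => c (i:ℕ) ω') ⁻¹' {b}) (fun _ => g b) ω ∂μ := by
          exact integral_congr_ae (Filter.Eventually.of_forall h1)
      _ = ∑ b : Fin k → Bool, ∫ ω,
            Set.indicator ((fun ω' => fun i : Fin k => c (i:ℕ) ω') ⁻¹' {b}) (fun _ => g b) ω ∂μ := by
          refine integral_finset_sum _ fun b _ => ?_
          exact (integrable_const (g b)).indicator ((hvecmeas k) (measurableSet_singleton b))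
      _ = (1/2:ℝ)^k * ∑ b : Fin k → Bool, g b := by
          rw [Finset.mul_sum]
          refine Finset.sum_congr rfl fun b _ => ?_
          rw [integral_indicator_const _ ((hvecmeas k) (measurableSet_singleton b)),
            measureReal_def, hmeasvec k b]
          simp [ENNReal.toReal_pow, smul_eq_mul]
  -- the iterates are the deterministic functions of the coins
  have hrep : ∀ (k : ℕ) (ω : Ω),
      x k ω = (P k (fun i : Fin k => c (i:ℕ) ω)).1 ∧
      y k ω = (P k (fun i : Fin k => c (i:ℕ) ω)).2 := by
    intro k
    induction k with
    | zero => intro ω; simp [P, hx0, hy0]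
    | succ k ih =>
      intro ω
      obtain ⟨ihx, ihy⟩ := ih ω
      have hsn : (fun i : Fin (k+1) => c (i:ℕ) ω)
          = Fin.snoc (fun i : Fin k => c (i:ℕ) ω) (c k ω) := by
        funext i
        refine Fin.lastCases ?_ (fun j => ?_) i
        · simp [Fin.snoc_last]
        · simp [Fin.snoc_castSucc]
      rw [hsn]
      have hs := hstep k ω
      rw [P_snoc, ← ihx, ← ihy]
      cases h : c k ω
      · simp only [h, Bool.false_eq_true, if_false] at hs ⊢
        exact ⟨congrArg Prod.fst hs, congrArg Prod.snd hs⟩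
      · simp only [h, if_true] at hs ⊢
        exact ⟨congrArg Prod.fst hs, congrArg Prod.snd hs⟩
  intro k
  obtain ⟨hX, hY, hD, hS⟩ := key k
  have hx : (∫ ω, x k ω ∂μ) = -(k:ℝ)/4 := by
    have : (∫ ω, x k ω ∂μ) = ∫ ω, (P k (fun i : Fin k => c (i:ℕ) ω)).1 ∂μ :=
      integral_congr_ae (Filter.Eventually.of_forall fun ω => (hrep k ω).1)
    rw [this, hint k (fun b => (P k b).1), hX]
  have hy : (∫ ω, y k ω ∂μ) = -(k:ℝ)/4 := by
    have : (∫ ω, y k ω ∂μ) = ∫ ω, (P k (fun i : Fin k => c (i:ℕ) ω)).2 ∂μ :=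
      integral_congr_ae (Filter.Eventually.of_forall fun ω => (hrep k ω).2)
    rw [this, hint k (fun b => (P k b).2), hY]
  have hd : (∫ ω, (x k ω - y k ω)^2 ∂μ) = (1/3) * (1 - (4:ℝ)^(-(k:ℤ))) := by
    have : (∫ ω, (x k ω - y k ω)^2 ∂μ)
        = ∫ ω, ((P k (fun i : Fin k => c (i:ℕ) ω)).1
            - (P k (fun i : Fin k => c (i:ℕ) ω)).2)^2 ∂μ := by
      refine integral_congr_ae (Filter.Eventually.of_forall fun ω => ?_)
      simp only [(hrep k ω).1, (hrep k ω).2]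
    rw [this, hint k (fun b => ((P k b).1 - (P k b).2)^2), hD]
  have hsum : (∫ ω, ((x k ω)^2 + (y k ω)^2) ∂μ)
      = (k:ℝ)^2/8 + (k:ℝ)/24 + (1/9) * (1 - (4:ℝ)^(-(k:ℤ))) := by
    have h1 : (∫ ω, ((x k ω)^2 + (y k ω)^2) ∂μ)
        = ∫ ω, ((P k (fun i : Fin k => c (i:ℕ) ω)).1^2
            + (P k (fun i : Fin k => c (i:ℕ) ω)).2^2) ∂μ := by
      refine integral_congr_ae (Filter.Eventually.of_forall fun ω => ?_)
      simp only [(hrep k ω).1, (hrep k ω).2]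
    rw [h1, hint k (fun b => (P k b).1^2 + (P k b).2^2)]
    have h2 : ∑ b : Fin k → Bool, ((P k b).1^2 + (P k b).2^2)
        = (∑ b : Fin k → Bool, ((P k b).1 - (P k b).2)^2) / 2
          + (∑ b : Fin k → Bool, ((P k b).1 + (P k b).2)^2) / 2 := by
      rw [Finset.sum_div, Finset.sum_div, ← Finset.sum_add_distrib]
      refine Finset.sum_congr rfl fun b _ => ?_
      ring
    rw [h2]
    have := hD
    have := hS
    nlinarith [hD, hS]
  refine ⟨hx, hy, hd, hsum, ?_⟩
  rw [hsum, hx, hy]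
  ring
end

section
/- Let T be θ-averaged with respect to ‖·‖_M, with infimal displacement vector v, and let x⋆ satisfy x⋆ - T x⋆ = v. Then the fixed-point iteration z^{k+1} = T̄ z^k with T̄ = I - αθS and z⁰ = x⋆ satisfies z^k = x⋆ - kαv for all k ≥ 0; in particular θ S z^k = v for all k. -/
section Aux

variable {H : Type*} [NormedAddCommGroup H] [InnerProductSpace ℝ H] (M : H →L[ℝ] H)

lemma Minner_comm' (hMsym : ∀ x y : H, (inner ℝ (M x) y : ℝ) = inner ℝ x (M y)) (x y : H) :
    Minner M x y = Minner M y x := by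
  unfold Minner
  rw [← hMsym y x, real_inner_comm]

lemma Minner_sub_left' (x y z : H) :
    Minner M (x - y) z = Minner M x z - Minner M y z := by
  simp [Minner, inner_sub_left]

lemma Minner_smul_left' (c : ℝ) (x y : H) :
    Minner M (c • x) y = c * Minner M x y := by
  simp [Minner, inner_smul_left]

lemma Minner_smul_right' (c : ℝ) (x y : H) :
    Minner M x (c • y) = c * Minner M x y := by
  simp [Minner, inner_smul_right]

lemma Minner_self_nonneg' (hMpos : ∀ x : H, x ≠ 0 → 0 < (inner ℝ x (M x) : ℝ)) (x : H) :
    0 ≤ Minner M x x := by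
  rcases eq_or_ne x 0 with h | h
  · simp [Minner, h]
  · exact (hMpos x h).le

lemma Mnorm_sq' (hMpos : ∀ x : H, x ≠ 0 → 0 < (inner ℝ x (M x) : ℝ)) (x : H) :
    Mnorm M x ^ 2 = Minner M x x :=
  Real.sq_sqrt (Minner_self_nonneg' M hMpos x)

/-- Key lemma: if `θ S y = v` and `x = y - c • v` with `0 < c` and `c*θ < 1`,
then `θ S x = v`. -/
lemma key_step (hMsym : ∀ x y : H, (inner ℝ (M x) y : ℝ) = inner ℝ x (M y))
    (hMpos : ∀ x : H, x ≠ 0 → 0 < (inner ℝ x (M x) : ℝ))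
    (θ : ℝ) (hθ : 0 < θ) (S : H → H)
    (hcoco : ∀ x y, Minner M (S x - S y) (x - y) ≥ (1 / 2) * (Mnorm M (S x - S y)) ^ 2)
    (v : H) (hvmin : ∀ w : H, Mnorm M v ≤ Mnorm M (θ • S w))
    (c : ℝ) (hc : 0 < c) (hcθ : c * θ < 1)
    (y x : H) (hy : θ • S y = v) (hx : x = y - c • v) : θ • S x = v := by
  set u : H := θ • S x with hu
  have hSx : S x = θ⁻¹ • u := by rw [hu, smul_smul, inv_mul_cancel₀ hθ.ne', one_smul]
  have hSy : S y = θ⁻¹ • v := by rw [← hy, smul_smul, inv_mul_cancel₀ hθ.ne', one_smul]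
  set s : ℝ := Minner M (u - v) v with hs
  set q : ℝ := Minner M (u - v) (u - v) with hq
  have hq0 : 0 ≤ q := Minner_self_nonneg' M hMpos _
  -- cocoercivity between x and y
  have hdiff : S x - S y = θ⁻¹ • (u - v) := by rw [hSx, hSy, smul_sub]
  have hxy : x - y = (-c) • v := by rw [hx]; simp [neg_smul]
  have hco := hcoco x y
  rw [hdiff, hxy, Mnorm_sq' M hMpos, Minner_smul_left', Minner_smul_left',
    Minner_smul_right', Minner_smul_right'] at hco
  -- hco : θ⁻¹ * (-c * Minner M (u-v) v) ≥ 1/2 * (θ⁻¹ * (θ⁻¹ * Minner M (u-v) (u-v)))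
  rw [← hs, ← hq] at hco
  have hθinv : (0:ℝ) < θ⁻¹ := inv_pos.mpr hθ
  have hcoco' : -(c * θ) * s ≥ (1/2) * q := by
    have hθ2 : (0:ℝ) < θ^2 := by positivity
    have h3 := mul_le_mul_of_nonneg_left hco hθ2.le
    have e1 : θ^2 * (1/2 * (θ⁻¹ * (θ⁻¹ * q))) = 1/2 * q := by
      field_simp
    have e2 : θ^2 * (θ⁻¹ * (-c * s)) = -(c * θ) * s := by
      field_simp
    rw [e1, e2] at h3
    exact h3
  -- minimality: Mnorm v ≤ Mnorm u
  have hmin := hvmin x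
  rw [← hu] at hmin
  have hmin2 : Minner M v v ≤ Minner M u u := by
    have h1 : Mnorm M v ^ 2 ≤ Mnorm M u ^ 2 := by
      apply pow_le_pow_left₀ (Real.sqrt_nonneg _) hmin
    rwa [Mnorm_sq' M hMpos, Mnorm_sq' M hMpos] at h1
  have hsubr : ∀ a b z : H, Minner M z (a - b) = Minner M z a - Minner M z b := by
    intro a b z; simp [Minner, map_sub, inner_sub_right]
  have c1 : q = Minner M u u - Minner M u v - (Minner M v u - Minner M v v) := by
    rw [hq, Minner_sub_left', hsubr, hsubr]
  have c2 : s = Minner M u v - Minner M v v := by rw [hs, Minner_sub_left']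
  have c3 : Minner M v u = Minner M u v := Minner_comm' M hMsym v u
  have hqs : q + 2 * s ≥ 0 := by rw [c1, c2, c3]; linarith
  -- conclude s = 0, q = 0
  have hs0 : s = 0 := by nlinarith [mul_pos hc hθ]
  have hq0' : q = 0 := by nlinarith
  have huv : u - v = 0 := by
    by_contra h
    exact absurd hq0' (ne_of_gt (hMpos _ h))
  rwa [sub_eq_zero] at huv

end Aux

/-- If `x⋆ - T x⋆ = v`, the iteration `z⁰ = x⋆`, `zᵏ⁺¹ = zᵏ - αθ S zᵏ` satisfies
`zᵏ = x⋆ - kα v`, and `θ S zᵏ = v` for all `k`. -/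
theorem stmt14 {H : Type*} [NormedAddCommGroup H] [InnerProductSpace ℝ H]
    (M : H →L[ℝ] H)
    (hMsym : ∀ x y : H, (inner ℝ (M x) y : ℝ) = inner ℝ x (M y))
    (hMpos : ∀ x : H, x ≠ 0 → 0 < (inner ℝ x (M x) : ℝ))
    (θ α : ℝ) (hθ : θ ∈ Set.Ioc (0 : ℝ) 1) (hα : α ∈ Set.Ioc (0 : ℝ) 1)
    (T S : H → H) (hS : ∀ x, S x = (1 / θ) • (x - T x))
    (hcoco : ∀ x y, Minner M (S x - S y) (x - y) ≥ (1 / 2) * (Mnorm M (S x - S y)) ^ 2)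
    (v : H) (hvmin : ∀ w : H, Mnorm M v ≤ Mnorm M (θ • S w))
    (xstar : H) (hxstar : θ • S xstar = v)
    (z : ℕ → H) (hz0 : z 0 = xstar)
    (hzstep : ∀ k, z (k + 1) = z k - (α * θ) • S (z k)) :
    ∀ k : ℕ, z k = xstar - ((k : ℝ) * α) • v ∧ θ • S (z k) = v := by
  obtain ⟨hθ0, hθ1⟩ := hθ
  obtain ⟨hα0, hα1⟩ := hα
  intro k
  induction k with
  | zero => constructor
            · simp [hz0]
            · rw [hz0]; exact hxstar
  | succ k ih =>
    obtain ⟨hzk, hSk⟩ := ih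
    have hhalf : (0:ℝ) < α / 2 := by linarith
    have hhalfθ : (α / 2) * θ < 1 := by nlinarith
    -- midpoint
    set w : H := z k - (α / 2) • v with hw
    have hSw : θ • S w = v :=
      key_step M hMsym hMpos θ hθ0 S hcoco v hvmin (α/2) hhalf hhalfθ (z k) w hSk hw
    -- next iterate
    have hstep : z (k + 1) = z k - α • v := by
      rw [hzstep k, mul_smul, hSk]
    have hzw : z (k + 1) = w - (α / 2) • v := by
      rw [hstep, hw]
      rw [sub_sub, ← add_smul]
      norm_num
    have hSnext : θ • S (z (k + 1)) = v :=
      key_step M hMsym hMpos θ hθ0 S hcoco v hvmin (α/2) hhalf hhalfθ w (z (k+1)) hSw hzw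
    refine ⟨?_, hSnext⟩
    rw [hstep, hzk, sub_sub, ← add_smul]
    push_cast
    ring_nf
end
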